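/- Let L be a finite-dimensional complex Lie algebra and let X ∈ L be such that ad X is not nilpotent. Then the set {λ ∈ ℂ : there exists a Lie algebra automorphism φ of L with φ X = λ • X} is finite, and every element λ of this set satisfies |λ| = 1. -/

import Mathlib

open Polynomial Module Pointwise

/-- If an endomorphism of a finite-dimensional complex vector space is not nilpotent,
its spectrum contains a nonzero element. -/
lemma exists_ne_zero_mem_spectrum_of_not_isNilpotent {M : Type*} [AddCommGroup M] [Module ℂ M]
    [FiniteDimensional ℂ M] (f : Module.End ℂ M) (h : ¬ IsNilpotent f) :
    ∃ μ ∈ spectrum ℂ f, μ ≠ 0 := by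
  by_contra hc
  push_neg at hc
  apply h
  have hint : IsIntegral ℂ f := Algebra.IsIntegral.isIntegral f
  set p := minpoly ℂ f with hp
  have hmonic : p.Monic := minpoly.monic hint
  have hsplit : p.Splits := IsAlgClosed.splits p
  have hroots : ∀ μ ∈ p.roots, μ = 0 := by
    intro μ hμ
    have : f.HasEigenvalue μ := Module.End.hasEigenvalue_iff_isRoot.mpr
      (isRoot_of_mem_roots hμ)
    exact hc μ (Module.End.hasEigenvalue_iff_mem_spectrum.mp this)
  have hpe : p = X ^ p.roots.card := by
    conv_lhs => rw [hsplit.eq_prod_roots_of_monic hmonic]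
    have : Multiset.map (fun a => X - C a) p.roots = Multiset.replicate p.roots.card X := by
      rw [Multiset.eq_replicate]
      constructor
      · simp
      · intro x hx
        obtain ⟨μ, hμ, rfl⟩ := Multiset.mem_map.mp hx
        rw [hroots μ hμ, map_zero, sub_zero]
    rw [this, Multiset.prod_replicate]
  refine ⟨p.roots.card, ?_⟩
  have h2 := minpoly.aeval ℂ f
  rw [← hp, hpe] at h2
  simpa using h2

/-- For any element `l` of the set in question, `l ≠ 0` and `l` scales the spectrum of `ad X`
into itself. -/
lemma key_scaling {L : Type*} [LieRing L] [LieAlgebra ℂ L] [FiniteDimensional ℂ L]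
    (X : L) (hX : ¬ IsNilpotent (LieAlgebra.ad ℂ L X)) {l : ℂ}
    (hl : ∃ φ : L ≃ₗ⁅ℂ⁆ L, φ X = l • X) :
    l ≠ 0 ∧ ∀ z ∈ spectrum ℂ (LieAlgebra.ad ℂ L X), l * z ∈ spectrum ℂ (LieAlgebra.ad ℂ L X) := by
  obtain ⟨φ, hφ⟩ := hl
  have hl0 : l ≠ 0 := by
    rintro rfl
    rw [zero_smul] at hφ
    have hX0 : X = 0 := by
      have := φ.injective (a₁ := X) (a₂ := 0) (by simpa using hφ)
      exact this
    apply hX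
    refine ⟨1, ?_⟩
    ext y
    simp [hX0]
  refine ⟨hl0, ?_⟩
  -- conjugation invariance of the spectrum
  have hconj : spectrum ℂ (LieAlgebra.ad ℂ L (φ X)) = spectrum ℂ (LieAlgebra.ad ℂ L X) := by
    have h1 : (φ : L ≃ₗ[ℂ] L).conjAlgEquiv ℂ (LieAlgebra.ad ℂ L X) = LieAlgebra.ad ℂ L (φ X) := by
      have := LieAlgebra.conj_ad_apply φ X
      simpa [LinearEquiv.conjAlgEquiv_apply, LinearEquiv.conj_apply, LinearMap.comp_assoc] using this
    rw [← h1]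
    exact AlgEquiv.spectrum_eq ((φ : L ≃ₗ[ℂ] L).conjAlgEquiv ℂ) (LieAlgebra.ad ℂ L X)
  have hsmul : LieAlgebra.ad ℂ L (φ X) = l • LieAlgebra.ad ℂ L X := by
    rw [hφ, map_smul]
  rw [hsmul] at hconj
  have hu : spectrum ℂ ((Units.mk0 l hl0 : ℂˣ) • LieAlgebra.ad ℂ L X)
      = (Units.mk0 l hl0 : ℂˣ) • spectrum ℂ (LieAlgebra.ad ℂ L X) :=
    spectrum.unit_smul_eq_smul _ _
  have hset : (Units.mk0 l hl0 : ℂˣ) • spectrum ℂ (LieAlgebra.ad ℂ L X)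
      = spectrum ℂ (LieAlgebra.ad ℂ L X) := by
    rw [← hu]
    have he : (Units.mk0 l hl0 : ℂˣ) • LieAlgebra.ad ℂ L X = l • LieAlgebra.ad ℂ L X := by
      simp [Units.smul_def]
    rw [he]
    exact hconj
  intro z hz
  have : (Units.mk0 l hl0 : ℂˣ) • z ∈ (Units.mk0 l hl0 : ℂˣ) • spectrum ℂ (LieAlgebra.ad ℂ L X) :=
    Set.smul_mem_smul_set hz
  rw [hset] at this
  simpa [Units.smul_def] using this

/-- Lie-algebra form of the non-nilpotent case of Lemma 5.1: if `ad X` is not nilpotent,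
then the set of `λ ∈ ℂ` for which some Lie algebra automorphism maps `X` to `λ • X`
is finite and consists of complex numbers of modulus one. -/
theorem stmt_5 {L : Type*} [LieRing L] [LieAlgebra ℂ L] [FiniteDimensional ℂ L]
    (X : L) (hX : ¬ IsNilpotent (LieAlgebra.ad ℂ L X)) :
    {l : ℂ | ∃ φ : L ≃ₗ⁅ℂ⁆ L, φ X = l • X}.Finite ∧
      ∀ l ∈ {l : ℂ | ∃ φ : L ≃ₗ⁅ℂ⁆ L, φ X = l • X}, ‖l‖ = 1 := by
  set σ := spectrum ℂ (LieAlgebra.ad ℂ L X) with hσ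
  have hσfin : σ.Finite := Module.End.finite_spectrum _
  obtain ⟨μ, hμσ, hμ0⟩ := exists_ne_zero_mem_spectrum_of_not_isNilpotent _ hX
  constructor
  · -- finiteness: l ↦ l * μ injects the set into σ
    have hsub : {l : ℂ | ∃ φ : L ≃ₗ⁅ℂ⁆ L, φ X = l • X} ⊆ (fun l => l * μ) ⁻¹' σ := by
      intro l hl
      exact (key_scaling X hX hl).2 μ hμσ
    have hinj : Function.Injective (fun l : ℂ => l * μ) :=
      fun a b h => mul_right_cancel₀ hμ0 h
    exact Set.Finite.subset (hσfin.preimage hinj.injOn) hsub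
  · intro l hl
    obtain ⟨hl0, hmul⟩ := key_scaling X hX hl
    -- all powers l^n * μ lie in σ
    have hpow : ∀ n : ℕ, l ^ n * μ ∈ σ := by
      intro n
      induction n with
      | zero => simpa using hμσ
      | succ n ih =>
        have := hmul _ ih
        rw [← mul_assoc] at this
        rw [pow_succ]
        convert this using 2
        ring
    -- the map n ↦ l^n * μ is not injective
    obtain ⟨a, -, b, -, hab, heq⟩ :=
      Set.infinite_univ.exists_ne_map_eq_of_mapsTo (fun n _ => hpow n) hσfin
    wlog hlt : a < b generalizing a b
    · exact this b a hab.symm heq.symm (by omega)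
    have hpoweq : l ^ a = l ^ b := mul_right_cancel₀ hμ0 heq
    have hk : l ^ (b - a) = 1 := by
      have hbs : l ^ b = l ^ a * l ^ (b - a) := by
        rw [← pow_add]
        congr 1
        omega
      have := hpoweq
      rw [hbs] at this
      have h1 : l ^ a * 1 = l ^ a * l ^ (b - a) := by rw [mul_one]; exact this
      exact (mul_left_cancel₀ (pow_ne_zero a hl0) h1).symm
    have habs : ‖l‖ ^ (b - a) = 1 := by
      rw [← norm_pow, hk, norm_one]
    have hk0 : b - a ≠ 0 := by omega
    rcases lt_trichotomy (‖l‖) 1 with h1 | h1 | h1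
    · exfalso
      have := pow_lt_one₀ (norm_nonneg l) h1 hk0
      rw [habs] at this
      exact lt_irrefl 1 this
    · exact h1
    · exfalso
      have := one_lt_pow₀ h1 hk0
      rw [habs] at this
      exact lt_irrefl 1 this
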